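/- A symmetric function d on {1,…,n} with zero diagonal satisfies the Kalmanson inequalities with respect to the standard circular order if and only if ω(i,j) = ½(d(i,j) + d(i+1,j+1) − d(i,j+1) − d(i+1,j)) ≥ 0 for all pairs i < j with the circular split S_{ij} nontrivial (indices taken cyclically), where the Kalmanson inequalities state that for all i₁ < i₂ < i₃ < i₄: d(i₁,i₃) + d(i₂,i₄) ≥ d(i₂,i₃) + d(i₁,i₄) and d(i₁,i₃) + d(i₂,i₄) ≥ d(i₁,i₂) + d(i₃,i₄). -/

import Mathlib

private lemma tele_sum (f : ℕ → ℝ) {a b : ℕ} (h : a ≤ b) :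
    ∑ q ∈ Finset.Ico a b, (f q - f (q+1)) = f a - f b := by
  induction b, h using Nat.le_induction with
  | base => simp
  | succ b hb ih => rw [Finset.sum_Ico_succ_top hb, ih]; abel

private lemma double_tele (D : ℕ → ℕ → ℝ) {a b c e : ℕ} (hab : a ≤ b) (hce : c ≤ e) :
    ∑ p ∈ Finset.Ico a b, ∑ q ∈ Finset.Ico c e,
      (D p q + D (p+1) (q+1) - D p (q+1) - D (p+1) q)
    = D a c + D b e - D b c - D a e := by
  have inner : ∀ p, ∑ q ∈ Finset.Ico c e,
      (D p q + D (p+1) (q+1) - D p (q+1) - D (p+1) q)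
      = ((fun r => D r c - D r e) p - (fun r => D r c - D r e) (p+1)) := by
    intro p
    have h2 := tele_sum (fun q => D p q - D (p+1) q) hce
    calc ∑ q ∈ Finset.Ico c e, (D p q + D (p+1) (q+1) - D p (q+1) - D (p+1) q)
        = ∑ q ∈ Finset.Ico c e,
            ((fun q => D p q - D (p+1) q) q - (fun q => D p q - D (p+1) q) (q+1)) := by
          apply Finset.sum_congr rfl; intros; ring
      _ = (D p c - D (p+1) c) - (D p e - D (p+1) e) := h2
      _ = _ := by ring
  rw [Finset.sum_congr rfl (fun p _ => inner p), tele_sum _ hab]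
  ring

open Fin.NatCast in
private lemma cast_ne' {n : ℕ} [NeZero n] {a b : ℕ} (h : a % n ≠ b % n) :
    (a : Fin n) ≠ (b : Fin n) := by
  simpa [Fin.ext_iff, Fin.val_natCast] using h

/-- A symmetric function with zero diagonal satisfies the Kalmanson
inequalities for the standard circular order on `Fin n` if and only if all the
split-decomposition weights `ω i j` of nontrivial circular splits are
nonnegative (indices cyclic; the split `S_{ij}` is nontrivial when
`i + 1 ≠ j` and `j + 1 ≠ i`). -/
theorem kalmanson_iff_weights_nonneg {n : ℕ} [NeZero n]
    (d : Fin n → Fin n → ℝ)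
    (hsym : ∀ i j, d i j = d j i) (hdiag : ∀ i, d i i = 0) :
    (∀ i₁ i₂ i₃ i₄ : Fin n, i₁ < i₂ → i₂ < i₃ → i₃ < i₄ →
        d i₁ i₃ + d i₂ i₄ ≥ d i₂ i₃ + d i₁ i₄ ∧
        d i₁ i₃ + d i₂ i₄ ≥ d i₁ i₂ + d i₃ i₄) ↔
    (∀ i j : Fin n, i < j → i + 1 ≠ j → j + 1 ≠ i →
        0 ≤ (d i j + d (i + 1) (j + 1) - d i (j + 1) - d (i + 1) j) / 2) := by
  letI := Fin.instCommRing n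
  have cast_succ : ∀ a : ℕ, ((a + 1 : ℕ) : Fin n) = (a : Fin n) + 1 := by
    intro a; push_cast; ring
  have hcast : ∀ m : ℕ, m < n → ((m : Fin n) : ℕ) = m := by
    intro m h; rw [Fin.val_natCast]; exact Nat.mod_eq_of_lt h
  have hm : ∀ m : ℕ, m < 2 * n → m % n = if m < n then m else m - n := by
    intro m h2; split_ifs with h
    · exact Nat.mod_eq_of_lt h
    · rw [Nat.mod_eq_sub_mod (le_of_not_gt h), Nat.mod_eq_of_lt (by omega)]
  constructor
  · -- Kalmanson → weights nonneg
    intro H i j hij h1 h2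
    have hv : (i : ℕ) < (j : ℕ) := hij
    have hjn : (j : ℕ) < n := j.isLt
    have e1 : i + 1 = (((i : ℕ) + 1 : ℕ) : Fin n) := by
      rw [cast_succ, Fin.cast_val_eq_self]
    have hi1n : (i : ℕ) + 1 < n := by omega
    have hne : (i : ℕ) + 1 ≠ (j : ℕ) := by
      intro hc; apply h1; rw [e1, hc, Fin.cast_val_eq_self]
    have l1 : i < i + 1 := by rw [e1, Fin.lt_def, hcast _ hi1n]; omega
    have l2 : i + 1 < j := by rw [e1, Fin.lt_def, hcast _ hi1n]; omega
    by_cases hj : (j : ℕ) + 1 < n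
    · have e2 : j + 1 = (((j : ℕ) + 1 : ℕ) : Fin n) := by
        rw [cast_succ, Fin.cast_val_eq_self]
      have l3 : j < j + 1 := by rw [e2, Fin.lt_def, hcast _ hj]; omega
      obtain ⟨K, -⟩ := H i (i+1) j (j+1) l1 l2 l3
      linarith
    · have hj1 : (j : ℕ) + 1 = n := by omega
      have e0 : j + 1 = (0 : Fin n) := by
        have e2 : j + 1 = (((j : ℕ) + 1 : ℕ) : Fin n) := by
          rw [cast_succ, Fin.cast_val_eq_self]
        rw [e2, hj1]; simp
      rw [e0] at h2 ⊢
      have hi0 : 0 < (i : ℕ) := by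
        rcases Nat.eq_zero_or_pos (i : ℕ) with hc | hc
        · exact absurd (Fin.ext (by simp [hc]) : (0 : Fin n) = i) h2
        · exact hc
      have l0 : (0 : Fin n) < i := by
        rw [Fin.lt_def]; simpa using hi0
      obtain ⟨-, K⟩ := H 0 i (i+1) j l0 l1 l2
      have s1 := hsym (i+1) 0
      have s2 := hsym i 0
      linarith
  · -- weights nonneg → Kalmanson
    intro H i₁ i₂ i₃ i₄ h12 h23 h34
    have key : ∀ P Q : Fin n, P ≠ Q → P + 1 ≠ Q → Q + 1 ≠ P →
        0 ≤ d P Q + d (P+1) (Q+1) - d P (Q+1) - d (P+1) Q := by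
      intro P Q hPQ h1 h2
      rcases hPQ.lt_or_gt with h | h
      · have := H P Q h h1 h2; linarith
      · have := H Q P h h2 h1
        have s1 := hsym P Q
        have s2 := hsym (P+1) (Q+1)
        have s3 := hsym P (Q+1)
        have s4 := hsym (P+1) Q
        linarith
    have v12 : (i₁ : ℕ) < (i₂ : ℕ) := h12
    have v23 : (i₂ : ℕ) < (i₃ : ℕ) := h23
    have v34 : (i₃ : ℕ) < (i₄ : ℕ) := h34
    have v4n : (i₄ : ℕ) < n := i₄.isLt
    have v1n : (i₁ : ℕ) < n := i₁.isLt
    constructor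
    · -- first Kalmanson inequality
      have S1 := double_tele (fun a b => d a b) (le_of_lt v12) (le_of_lt v34)
      simp only [Fin.cast_val_eq_self] at S1
      have nn : 0 ≤ ∑ p ∈ Finset.Ico (i₁ : ℕ) (i₂ : ℕ), ∑ q ∈ Finset.Ico (i₃ : ℕ) (i₄ : ℕ),
          ((fun a b : ℕ => d a b) p q + (fun a b : ℕ => d a b) (p+1) (q+1)
            - (fun a b : ℕ => d a b) p (q+1) - (fun a b : ℕ => d a b) (p+1) q) := by
        refine Finset.sum_nonneg fun p hp => Finset.sum_nonneg fun q hq => ?_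
        simp only [Finset.mem_Ico] at hp hq
        have k := key (p : Fin n) (q : Fin n)
          (cast_ne' (by rw [hm p (by omega), hm q (by omega)]; split_ifs <;> omega))
          (by rw [← cast_succ]
              exact cast_ne' (by rw [hm (p+1) (by omega), hm q (by omega)]; split_ifs <;> omega))
          (by rw [← cast_succ]
              exact cast_ne' (by rw [hm (q+1) (by omega), hm p (by omega)]; split_ifs <;> omega))
        simpa only [cast_succ] using k
      rw [S1] at nn
      linarith
    · -- second Kalmanson inequality
      have S2 := double_tele (fun a b => d a b) (le_of_lt v23)
        (show (i₄ : ℕ) ≤ (i₁ : ℕ) + n by omega)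
      have ew : (((i₁ : ℕ) + n : ℕ) : Fin n) = i₁ := by
        push_cast
        simp [Fin.cast_val_eq_self]
      simp only [ew, Fin.cast_val_eq_self] at S2
      have nn : 0 ≤ ∑ p ∈ Finset.Ico (i₂ : ℕ) (i₃ : ℕ), ∑ q ∈ Finset.Ico (i₄ : ℕ) ((i₁ : ℕ) + n),
          ((fun a b : ℕ => d a b) p q + (fun a b : ℕ => d a b) (p+1) (q+1)
            - (fun a b : ℕ => d a b) p (q+1) - (fun a b : ℕ => d a b) (p+1) q) := by
        refine Finset.sum_nonneg fun p hp => Finset.sum_nonneg fun q hq => ?_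
        simp only [Finset.mem_Ico] at hp hq
        have k := key (p : Fin n) (q : Fin n)
          (cast_ne' (by rw [hm p (by omega), hm q (by omega)]; split_ifs <;> omega))
          (by rw [← cast_succ]
              exact cast_ne' (by rw [hm (p+1) (by omega), hm q (by omega)]; split_ifs <;> omega))
          (by rw [← cast_succ]
              exact cast_ne' (by rw [hm (q+1) (by omega), hm p (by omega)]; split_ifs <;> omega))
        simpa only [cast_succ] using k
      rw [S2] at nn
      have s1 := hsym i₂ i₁
      have s2 := hsym i₃ i₁
      linarith
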